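/- Let f, g : ℝ → ℝ be C¹ functions with g > 0, let a ∈ ℝ, and set α(t) = f(t)/g(t) and h(r) = (∫ₐʳ f(t) dt)/(∫ₐʳ g(t) dt) for r > a. Then h is differentiable on (a,∞) and h'(r) = g(r) · (∫ₐʳ (∫ₐᵘ g(t) dt) · α'(u) du) / (∫ₐʳ g(t) dt)². -/

import Mathlib

open intervalIntegral

/-- Quantitative ratio derivative: for `C¹` functions `f, g` with `g > 0`, the quotient
`h(r) = (∫ₐʳ f)/(∫ₐʳ g)` satisfies
`h'(r) = g(r)·(∫ₐʳ (∫ₐᵘ g) α'(u) du)/(∫ₐʳ g)²` with `α = f/g`. -/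
theorem integral_ratio_hasDerivAt
    (f g : ℝ → ℝ) (hf : ContDiff ℝ 1 f) (hg : ContDiff ℝ 1 g)
    (hgpos : ∀ t, 0 < g t) (a : ℝ) :
    ∀ r, a < r →
      HasDerivAt (fun ρ => (∫ t in a..ρ, f t) / (∫ t in a..ρ, g t))
        (g r * (∫ u in a..r, (∫ t in a..u, g t) * deriv (fun t => f t / g t) u) /
          (∫ t in a..r, g t) ^ 2) r := by
  intro r hr
  have hfc : Continuous f := hf.continuous
  have hgc : Continuous g := hg.continuous
  have hgne : ∀ t, g t ≠ 0 := fun t => (hgpos t).ne'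
  set α : ℝ → ℝ := fun t => f t / g t with hα_def
  have hαC : ContDiff ℝ 1 α := hf.div hg hgne
  have hαd : ∀ x, HasDerivAt α (deriv α x) x := fun x =>
    ((hαC.differentiable one_ne_zero) x).hasDerivAt
  have hα'c : Continuous (deriv α) := hαC.continuous_deriv le_rfl
  set G : ℝ → ℝ := fun ρ => ∫ t in a..ρ, g t with hG_def
  have hGd : ∀ x, HasDerivAt G (g x) x := fun x =>
    integral_hasDerivAt_right (hgc.intervalIntegrable a x)
      (hgc.stronglyMeasurableAtFilter _ _) hgc.continuousAt
  have hFd : HasDerivAt (fun ρ => ∫ t in a..ρ, f t) (f r) r :=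
    integral_hasDerivAt_right (hfc.intervalIntegrable a r)
      (hfc.stronglyMeasurableAtFilter _ _) hfc.continuousAt
  have hGpos : 0 < G r :=
    intervalIntegral_pos_of_pos (hgc.intervalIntegrable a r) hgpos hr
  have hdiv := hFd.div (hGd r) hGpos.ne'
  -- integration by parts identity
  have hibp : ∫ u in a..r, G u * deriv α u =
      G r * α r - G a * α a - ∫ u in a..r, g u * α u :=
    integral_mul_deriv_eq_deriv_mul (fun x _ => hGd x) (fun x _ => hαd x)
      (hgc.intervalIntegrable a r) (hα'c.intervalIntegrable a r)
  have hGa : G a = 0 := integral_same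
  have hgα : (∫ u in a..r, g u * α u) = ∫ u in a..r, f u := by
    apply intervalIntegral.integral_congr
    intro x _
    show g x * (f x / g x) = f x
    rw [mul_div_assoc'] -- g x * f x / g x
    exact mul_div_cancel_left₀ _ (hgne x)
  have key : G r * α r - (∫ u in a..r, f u) = ∫ u in a..r, G u * deriv α u := by
    rw [hibp, hGa, hgα]; ring
  refine hdiv.congr_deriv ?_
  rw [← key]
  simp only [α]
  field_simp [hgne r, show (∫ t in a..r, g t) ≠ 0 from hGpos.ne']
  ring
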